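/- Let C₁, C₂, Y, Z be strictly positive real numbers, let R_c be a positive integer, define g(n) = (C₁·⌈n/R_c⌉ + C₂)·(Y/n + Z) for positive integers n, and set x = √(C₂·Y/(C₁·Z·R_c)). Assume x ≥ 1. Then for every positive integer n, min( g(⌊x⌋·R_c), g(⌈x⌉·R_c) ) ≤ g(n); that is, the minimum of g over the positive integers is attained at ⌊x⌋·R_c or at ⌈x⌉·R_c. -/
import Mathlib


theorem stmt_6 (C₁ C₂ Y Z : ℝ) (hC₁ : 0 < C₁) (hC₂ : 0 < C₂) (hY : 0 < Y) (hZ : 0 < Z)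
    (Rc : ℕ) (hRc : 0 < Rc)
    (g : ℕ → ℝ)
    (hg : ∀ n : ℕ, 0 < n →
      g n = (C₁ * (⌈(n : ℝ) / (Rc : ℝ)⌉ : ℤ) + C₂) * (Y / (n : ℝ) + Z))
    (x : ℝ) (hx : x = Real.sqrt (C₂ * Y / (C₁ * Z * (Rc : ℝ)))) (hx1 : 1 ≤ x) :
    ∀ n : ℕ, 0 < n → min (g (⌊x⌋₊ * Rc)) (g (⌈x⌉₊ * Rc)) ≤ g n := by
  have hRc' : (0:ℝ) < (Rc:ℝ) := by exact_mod_cast hRc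
  have hx0 : 0 < x := lt_of_lt_of_le one_pos hx1
  have hx2 : x ^ 2 = C₂ * Y / (C₁ * Z * Rc) := by
    rw [hx, Real.sq_sqrt]; positivity
  have hCY : C₂ * Y = x ^ 2 * (C₁ * Z * Rc) := by
    field_simp at hx2; linarith
  -- value of g at multiples of Rc
  have hgm : ∀ m : ℕ, 0 < m → g (m * Rc) = (C₁ * m + C₂) * (Y / ((m : ℝ) * Rc) + Z) := by
    intro m hm
    rw [hg _ (Nat.mul_pos hm hRc)]
    have h1 : ((m * Rc : ℕ) : ℝ) / (Rc : ℝ) = (m : ℝ) := by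
      push_cast; field_simp
    rw [h1]
    push_cast [Int.ceil_natCast]
    ring
  -- monotonicity on the real-level function
  have mono : ∀ A B : ℝ, 0 < A → A ≤ B → A * B ≤ x ^ 2 →
      (C₁ * B + C₂) * (Y / (B * Rc) + Z) ≤ (C₁ * A + C₂) * (Y / (A * Rc) + Z) := by
    intro A B hA hAB hABx
    have hB : 0 < B := lt_of_lt_of_le hA hAB
    rw [div_add' _ _ _ (by positivity : (B:ℝ) * Rc ≠ 0),
        div_add' _ _ _ (by positivity : (A:ℝ) * Rc ≠ 0),
        ← mul_div_assoc, ← mul_div_assoc,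
        div_le_div_iff₀ (by positivity) (by positivity)]
    have hexp : (C₁ * B + C₂) * (Y + Z * (B * (Rc:ℝ))) * (A * Rc)
        - (C₁ * A + C₂) * (Y + Z * (A * (Rc:ℝ))) * (B * Rc)
        = C₁ * Z * Rc * Rc * (B - A) * (A * B - x ^ 2) := by
      linear_combination ((Rc:ℝ) * (A - B)) * hCY
    nlinarith [hexp, mul_nonneg (mul_nonneg (sub_nonneg.2 hAB) (sub_nonneg.2 hABx))
        (by positivity : (0:ℝ) ≤ C₁ * Z * Rc * Rc)]
  have mono' : ∀ A B : ℝ, 0 < A → A ≤ B → x ^ 2 ≤ A * B →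
      (C₁ * A + C₂) * (Y / (A * Rc) + Z) ≤ (C₁ * B + C₂) * (Y / (B * Rc) + Z) := by
    intro A B hA hAB hABx
    have hB : 0 < B := lt_of_lt_of_le hA hAB
    rw [div_add' _ _ _ (by positivity : (B:ℝ) * Rc ≠ 0),
        div_add' _ _ _ (by positivity : (A:ℝ) * Rc ≠ 0),
        ← mul_div_assoc, ← mul_div_assoc,
        div_le_div_iff₀ (by positivity) (by positivity)]
    have hexp : (C₁ * B + C₂) * (Y + Z * (B * (Rc:ℝ))) * (A * Rc)
        - (C₁ * A + C₂) * (Y + Z * (A * (Rc:ℝ))) * (B * Rc)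
        = C₁ * Z * Rc * Rc * (B - A) * (A * B - x ^ 2) := by
      linear_combination ((Rc:ℝ) * (A - B)) * hCY
    nlinarith [hexp, mul_nonneg (mul_nonneg (sub_nonneg.2 hAB) (sub_nonneg.2 hABx))
        (by positivity : (0:ℝ) ≤ C₁ * Z * Rc * Rc)]
  have hfl1 : 1 ≤ ⌊x⌋₊ := Nat.le_floor (by exact_mod_cast hx1)
  have hfl : (⌊x⌋₊ : ℝ) ≤ x := Nat.floor_le hx0.le
  have hce : x ≤ (⌈x⌉₊ : ℝ) := Nat.le_ceil x
  intro n hn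
  set k : ℤ := ⌈(n : ℝ) / (Rc : ℝ)⌉ with hk
  have hk1 : 1 ≤ k := by
    have : (0:ℝ) < (n : ℝ) / (Rc : ℝ) := by
      apply div_pos _ hRc'; exact_mod_cast hn
    exact Int.ceil_pos.2 this
  set m : ℕ := k.toNat with hm
  have hm1 : 1 ≤ m := by omega
  have hkm : (m : ℤ) = k := Int.toNat_of_nonneg (by omega)
  have hkmR : (m : ℝ) = (k : ℝ) := by exact_mod_cast hkm
  -- n ≤ m * Rc
  have hnle : (n : ℝ) ≤ (m : ℝ) * Rc := by
    have := Int.le_ceil ((n : ℝ) / (Rc : ℝ))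
    rw [← hk, ← hkmR] at this
    calc (n:ℝ) = (n:ℝ) / Rc * Rc := by field_simp
      _ ≤ (m:ℝ) * Rc := by
        apply mul_le_mul_of_nonneg_right this hRc'.le
  -- step 1: g (m * Rc) ≤ g n
  have step1 : g (m * Rc) ≤ g n := by
    rw [hgm m hm1, hg n hn, ← hk, ← hkmR]
    have hmpos : (0:ℝ) < (m:ℝ) := by exact_mod_cast hm1
    have h1 : Y / ((m:ℝ) * Rc) ≤ Y / (n:ℝ) := by
      apply div_le_div_of_nonneg_left hY.le (by exact_mod_cast hn) hnle
    have h2 : 0 < C₁ * (m:ℝ) + C₂ := by positivity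
    nlinarith
  refine le_trans ?_ step1
  by_cases hcase : m ≤ ⌊x⌋₊
  · apply le_trans (min_le_left _ _)
    rw [hgm _ hfl1, hgm m hm1]
    apply mono (m:ℝ) (⌊x⌋₊:ℝ) (by exact_mod_cast hm1) (by exact_mod_cast hcase)
    calc (m:ℝ) * (⌊x⌋₊:ℝ) ≤ x * x := by
          apply mul_le_mul _ hfl (by positivity) hx0.le
          exact le_trans (by exact_mod_cast hcase) hfl
      _ = x ^ 2 := by ring
  · push_neg at hcase
    have hcm : ⌈x⌉₊ ≤ m := le_trans (Nat.ceil_le_floor_add_one x) hcase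
    have hc1 : 1 ≤ ⌈x⌉₊ := le_trans hfl1 (Nat.floor_le_ceil x)
    apply le_trans (min_le_right _ _)
    rw [hgm _ hc1, hgm m hm1]
    apply mono' (⌈x⌉₊:ℝ) (m:ℝ) (by exact_mod_cast hc1) (by exact_mod_cast hcm)
    calc x ^ 2 = x * x := by ring
      _ ≤ (⌈x⌉₊:ℝ) * (m:ℝ) := by
          apply mul_le_mul hce (le_trans hce (by exact_mod_cast hcm)) hx0.le (by positivity)
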